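/- Let H₀, H₁ ∈ B(𝓗) be self-adjoint, let ε > 0 and η > 0, let g be a switching function, set H(t) := H₀ + ε·g(η·t)·H₁ and φ(s) := ∫₀^s g(u) du, and let U be a unitary propagator for the family t ↦ H(t). Define V(s,u) := e^{i(ε/η)φ(s)H₁} · U(s/η, u/η) · e^{−i(ε/η)φ(u)H₁} and Ĥ(s) := e^{i(ε/η)φ(s)H₁} · H₀ · e^{−i(ε/η)φ(s)H₁}. Then every V(s,u) is unitary, V(s,s) = 1 and V(s,r)·V(r,u) = V(s,u) for all s,r,u ∈ ℝ, and for each fixed u the map s ↦ V(s,u) is differenti2able in operator norm with i·η·(d/ds)V(s,u) = Ĥ(s)·V(s,u). -/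

import Mathlib

open MeasureTheory
set_option synthInstance.maxHeartbeats 1000000
set_option maxHeartbeats 1000000

variable {𝓗 : Type*} [NormedAddCommGroup 𝓗] [InnerProductSpace ℂ 𝓗] [CompleteSpace 𝓗]

/-- A unitary propagator for the family `t ↦ H t` of bounded self-adjoint operators:
every `U t r` is unitary, `U t t = 1`, `U t r * U r u = U t u`, and for each fixed `r`
the map `t ↦ U t r` is differentiable in operator norm with `i·(d/dt)U(t,r) = H(t)·U(t,r)`,
i.e. the derivative is `−i·(H(t)·U(t,r))`. -/
def IsUnitaryPropagator (H : ℝ → 𝓗 →L[ℂ] 𝓗) (U : ℝ → ℝ → 𝓗 →L[ℂ] 𝓗) : Prop :=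
  (∀ t r, U t r ∈ unitary (𝓗 →L[ℂ] 𝓗)) ∧ (∀ t, U t t = 1) ∧
  (∀ t r u, U t r * U r u = U t u) ∧
  (∀ r t, HasDerivAt (fun s => U s r) (-(Complex.I • (H t * U t r))) t)


set_option linter.unusedSectionVars false

noncomputable def expI (H₁ : 𝓗 →L[ℂ] 𝓗) (r : ℝ) : 𝓗 →L[ℂ] 𝓗 :=
  NormedSpace.exp ((r : ℂ) • (Complex.I • H₁))

lemma expI_arg (H₁ : 𝓗 →L[ℂ] 𝓗) (r : ℝ) :
    (((r : ℂ)) * Complex.I) • H₁ = (r : ℂ) • (Complex.I • H₁) := mul_smul _ _ _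

lemma expI_arg_neg (H₁ : 𝓗 →L[ℂ] 𝓗) (r : ℝ) :
    (-(((r : ℂ)) * Complex.I)) • H₁ = ((-r : ℝ) : ℂ) • (Complex.I • H₁) := by
  rw [Complex.ofReal_neg, neg_smul, neg_smul, mul_smul]

lemma expI_add (H₁ : 𝓗 →L[ℂ] 𝓗) (a b : ℝ) :
    expI H₁ a * expI H₁ b = expI H₁ (a + b) := by
  letI : NormedAlgebra ℚ (𝓗 →L[ℂ] 𝓗) := .restrictScalars ℚ ℂ _
  unfold expI
  rw [← NormedSpace.exp_add_of_commute (((Commute.refl _).smul_left _).smul_right _)]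
  rw [Complex.ofReal_add, add_smul]

lemma expI_zero (H₁ : 𝓗 →L[ℂ] 𝓗) : expI H₁ 0 = 1 := by
  simp [expI, NormedSpace.exp_zero]

lemma expI_cancel (H₁ : 𝓗 →L[ℂ] 𝓗) (a : ℝ) (X : 𝓗 →L[ℂ] 𝓗) :
    expI H₁ (-a) * (expI H₁ a * X) = X := by
  rw [← mul_assoc, expI_add, neg_add_cancel, expI_zero, one_mul]

lemma expI_unitary (H₁ : 𝓗 →L[ℂ] 𝓗) (hH₁ : IsSelfAdjoint H₁) (r : ℝ) :
    expI H₁ r ∈ unitary (𝓗 →L[ℂ] 𝓗) := by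
  letI : NormedAlgebra ℚ (𝓗 →L[ℂ] 𝓗) := .restrictScalars ℚ ℂ _
  apply NormedSpace.exp_mem_unitary_of_mem_skewAdjoint
  rw [skewAdjoint.mem_iff]
  simp [star_smul, Complex.conj_ofReal, Complex.conj_I, hH₁.star_eq, smul_smul, neg_smul]

/-- Let `H(t) := H₀ + ε·g(η·t)·H₁`, `φ(s) := ∫₀^s g`, `U` a unitary propagator for
`t ↦ H(t)`, and set `V(s,u) := e^{i(ε/η)φ(s)H₁}·U(s/η, u/η)·e^{−i(ε/η)φ(u)H₁}` and
`Ĥ(s) := e^{i(ε/η)φ(s)H₁}·H₀·e^{−i(ε/η)φ(s)H₁}`.  Then every `V(s,u)` is unitary,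
`V(s,s) = 1`, `V(s,r)·V(r,u) = V(s,u)`, and for each fixed `u` the map `s ↦ V(s,u)` is
differentiable in operator norm with `i·η·(d/ds)V(s,u) = Ĥ(s)·V(s,u)`, i.e. the
derivative is `(−i/η)·(Ĥ(s)·V(s,u))`. -/
theorem stmt_19 (H₀ H₁ : 𝓗 →L[ℂ] 𝓗) (hH₀ : IsSelfAdjoint H₀) (hH₁ : IsSelfAdjoint H₁)
    (ε η : ℝ) (hε : 0 < ε) (hη : 0 < η)
    (g : ℝ → ℝ) (hg : ContDiff ℝ 1 g) (hg0 : ∀ s ≤ (0 : ℝ), g s = 0)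
    (hg' : ∀ s ∉ Set.Ioo (0 : ℝ) 1, deriv g s = 0)
    (H : ℝ → 𝓗 →L[ℂ] 𝓗) (hH : ∀ t, H t = H₀ + (ε * g (η * t)) • H₁)
    (φ : ℝ → ℝ) (hφ : ∀ s, φ s = ∫ u in (0 : ℝ)..s, g u)
    (U : ℝ → ℝ → 𝓗 →L[ℂ] 𝓗) (hU : IsUnitaryPropagator H U)
    (V : ℝ → ℝ → 𝓗 →L[ℂ] 𝓗)
    (hV : ∀ s u, V s u =
      NormedSpace.exp (((((ε / η) * φ s : ℝ) : ℂ) * Complex.I) • H₁) * U (s / η) (u / η) *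
      NormedSpace.exp ((-((((ε / η) * φ u : ℝ) : ℂ) * Complex.I)) • H₁))
    (Hhat : ℝ → 𝓗 →L[ℂ] 𝓗)
    (hHhat : ∀ s, Hhat s =
      NormedSpace.exp (((((ε / η) * φ s : ℝ) : ℂ) * Complex.I) • H₁) * H₀ *
      NormedSpace.exp ((-((((ε / η) * φ s : ℝ) : ℂ) * Complex.I)) • H₁)) :
    (∀ s u, V s u ∈ unitary (𝓗 →L[ℂ] 𝓗)) ∧
    (∀ s, V s s = 1) ∧
    (∀ s r u, V s r * V r u = V s u) ∧
    (∀ u s, HasDerivAt (fun s' => V s' u)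
      (((-Complex.I) / (η : ℂ)) • (Hhat s * V s u)) s) := by
  obtain ⟨hUuni, hUone, hUmul, hUderiv⟩ := hU
  set ψ : ℝ → ℝ := fun s => (ε / η) * φ s with hψ
  have hV' : ∀ s u, V s u = expI H₁ (ψ s) * U (s / η) (u / η) * expI H₁ (-(ψ u)) := by
    intro s u
    rw [hV s u, expI_arg, expI_arg_neg]
    rfl
  have hHhat' : ∀ s, Hhat s = expI H₁ (ψ s) * H₀ * expI H₁ (-(ψ s)) := by
    intro s
    rw [hHhat s, expI_arg, expI_arg_neg]
    rfl
  refine ⟨?_, ?_, ?_, ?_⟩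
  · intro s u
    rw [hV']
    exact mul_mem (mul_mem (expI_unitary H₁ hH₁ _) (hUuni _ _)) (expI_unitary H₁ hH₁ _)
  · intro s
    rw [hV', hUone, mul_one, expI_add, add_neg_cancel, expI_zero]
  · intro s r u
    rw [hV', hV', hV']
    simp only [mul_assoc]
    rw [expI_cancel, ← mul_assoc (U (s/η) (r/η)), hUmul]
  · intro u s
    have hφd : HasDerivAt φ (g s) s := by
      have h0 : HasDerivAt (fun x => ∫ t in (0:ℝ)..x, g t) (g s) s :=
        ((hg.continuous).integral_hasStrictDerivAt 0 s).hasDerivAt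
      simpa [show φ = fun x => ∫ t in (0:ℝ)..x, g t from funext hφ] using h0
    have hψd : HasDerivAt ψ ((ε / η) * g s) s := hφd.const_mul (ε / η)
    have hψcd : HasDerivAt (fun s' => ((ψ s' : ℝ) : ℂ)) (((ε / η) * g s : ℝ) : ℂ) s :=
      hψd.ofReal_comp
    set A : 𝓗 →L[ℂ] 𝓗 := Complex.I • H₁ with hA
    have hEd : HasDerivAt (fun s' => expI H₁ (ψ s'))
        ((((ε / η) * g s : ℝ) : ℂ) • (NormedSpace.exp (((ψ s : ℝ) : ℂ) • A) * A)) s := by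
      have := (hasDerivAt_exp_smul_const (𝕂 := ℂ) A (((ψ s : ℝ) : ℂ))).scomp s hψcd
      exact this
    have hdiv : HasDerivAt (fun x : ℝ => x / η) (1 / η) s := by
      simpa using (hasDerivAt_id s).div_const η
    have hUd : HasDerivAt (fun s' => U (s' / η) (u / η))
        ((1 / η) • (-(Complex.I • (H (s / η) * U (s / η) (u / η))))) s :=
      by have := (hUderiv (u / η) (s / η)).scomp s hdiv; exact this
    have hD := (hEd.mul hUd).mul_const (expI H₁ (-(ψ u)))
    have hfun : (fun s' => V s' u) = fun s' => expI H₁ (ψ s') * U (s' / η) (u / η) *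
        expI H₁ (-(ψ u)) := funext fun s' => hV' s' u
    rw [hfun]
    convert hD using 1
    rotate_right
    have hgs : H (s / η) = H₀ + (ε * g s) • H₁ := by
      rw [hH]; congr 2
      field_simp
    set E := expI H₁ (ψ s) with hE
    set UU := U (s / η) (u / η) with hUU
    set C := expI H₁ (-(ψ u)) with hC
    have hHV : Hhat s * V s u = E * (H₀ * (UU * C)) := by
      rw [hHhat', hV' s u]
      simp only [mul_assoc]
      rw [expI_cancel]
    rw [hHV, hgs]
    have hEexp : NormedSpace.exp (((ψ s : ℝ) : ℂ) • A) = E := rfl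
    rw [hEexp]
    simp only [add_mul, smul_mul_assoc, mul_add, mul_smul_comm, mul_neg, neg_mul, smul_add,
      smul_neg, neg_smul, smul_smul, mul_assoc, hA]
    push_cast
    have hη' : (η : ℂ) ≠ 0 := by exact_mod_cast hη.ne'
    field_simp
    match_scalars <;> (push_cast; field_simp; try ring)
    · linear_combination (mul_inv_cancel₀ hη')
    · linear_combination ((Complex.I * (ε : ℂ) * (g s : ℂ))) * mul_inv_cancel₀ hη'
    all_goals rfl
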